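/- For all integers s ≥ 2 and t with 1 ≤ t ≤ s−1, the function φ(s, t) = t·(ξ_s − ξ_t) + (s−t)·(ξ_s − ξ_{s−t}) is maximized at the balanced split: φ(s, t) ≤ φ(s, ⌊s/2⌋). Moreover φ is symmetric: φ(s, t) = φ(s, s−t). -/

import Mathlib

/-- The `n`-th harmonic number `ξ_n = Σ_{j=1}^n 1/j`. -/
noncomputable def xi (n : ℕ) : ℝ := ∑ j ∈ Finset.range n, (1 : ℝ) / (j + 1)

/-- `φ(s, t) = t·(ξ_s − ξ_t) + (s−t)·(ξ_s − ξ_{s−t})`. -/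
noncomputable def phi (s t : ℕ) : ℝ :=
  (t : ℝ) * (xi s - xi t) + ((s : ℝ) - (t : ℝ)) * (xi s - xi (s - t))

lemma xi_succ (n : ℕ) : xi (n + 1) = xi n + 1 / (n + 1) := by
  simp [xi, Finset.sum_range_succ]

lemma xi_mono {a b : ℕ} (h : a ≤ b) : xi a ≤ xi b := by
  apply Finset.sum_le_sum_of_subset_of_nonneg (Finset.range_subset_range.2 h)
  intro i _ _; positivity

lemma xi_key (n : ℕ) : ((n : ℝ) + 1) * xi (n + 1) = ((n : ℝ) + 1) * xi n + 1 := by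
  have hn : (n : ℝ) + 1 ≠ 0 := by positivity
  rw [xi_succ]
  field_simp

lemma phi_symm (s t : ℕ) (h : t ≤ s) : phi s t = phi s (s - t) := by
  unfold phi
  rw [Nat.sub_sub_self h]
  have : ((s - t : ℕ) : ℝ) = (s : ℝ) - t := by
    push_cast [h]; ring
  rw [this]; ring

lemma phi_step (s t : ℕ) (h : 2 * t + 1 ≤ s) : phi s t ≤ phi s (t + 1) := by
  set u := s - (t + 1) with hu
  have h1 : s - t = u + 1 := by omega
  have h2 : t ≤ u := by omega
  have hcast : (s : ℝ) = (t : ℝ) + 1 + u := by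
    have : s = t + 1 + u := by omega
    exact_mod_cast congrArg (Nat.cast (R := ℝ)) this
  unfold phi
  rw [h1, ← hu]
  push_cast
  have k1 := xi_key t
  have k2 := xi_key u
  have k3 := xi_mono h2
  nlinarith [k1, k2, k3]

lemma phi_le_half (s : ℕ) : ∀ k t : ℕ, t + k = s / 2 → phi s t ≤ phi s (s / 2) := by
  intro k
  induction k with
  | zero =>
      intro t ht
      have h : t = s / 2 := by omega
      rw [h]
  | succ n ih =>
      intro t ht
      have hstep : phi s t ≤ phi s (t + 1) := by
        apply phi_step
        omega
      exact hstep.trans (ih (t + 1) (by omega))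

/-- for integers `s ≥ 2` and `1 ≤ t ≤ s−1`, `φ(s, ·)` is
maximized at the balanced split, `φ(s, t) ≤ φ(s, ⌊s/2⌋)`, and is symmetric:
`φ(s, t) = φ(s, s−t)`. -/
theorem phi_max_at_balanced_and_symm (s t : ℕ) (hs : 2 ≤ s) (ht1 : 1 ≤ t)
    (hts : t ≤ s - 1) :
    phi s t ≤ phi s (s / 2) ∧ phi s t = phi s (s - t) := by
  have hts' : t ≤ s := by omega
  refine ⟨?_, phi_symm s t hts'⟩
  rcases le_or_gt t (s / 2) with h | h
  · exact phi_le_half s (s / 2 - t) t (by omega)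
  · rw [phi_symm s t hts']
    exact phi_le_half s (s / 2 - (s - t)) (s - t) (by omega)
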